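/- Let L be a non-discrete, compactly generated, topologically simple t.d.l.c. group (Hausdorff, locally compact, totally disconnected). Then the virtual center of L is trivial: VZ(L) = {1}. Consequently, for every open compact subgroup G of L one has VZ(G) = {1} (where VZ(G) is computed inside G). -/

import Mathlib

open scoped Pointwise
open Set Filter Topology

section AuxVD

variable {G : Type*} [Group G] [TopologicalSpace G] [IsTopologicalGroup G]

private lemma aux_isOpen_finsetInf {ι : Type*} (s : Finset ι) (H : ι → Subgroup G)
    (h : ∀ i ∈ s, IsOpen ((H i : Set G))) : IsOpen ((s.inf H : Subgroup G) : Set G) := by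
  induction s using Finset.cons_induction with
  | empty => simp
  | cons a s ha ih =>
      rw [Finset.inf_cons, Subgroup.coe_inf]
      exact (h a (Finset.mem_cons_self a s)).inter
        (ih fun i hi => h i (Finset.mem_cons.mpr (Or.inr hi)))

private lemma aux_exist_mul_closure_nhd {W : Set G} (Wcpt : IsCompact W) (WClopen : IsClopen W) :
    ∃ T ∈ 𝓝 (1 : G), W * T ⊆ W := by
  apply Wcpt.induction_on (p := fun S ↦ ∃ T ∈ 𝓝 (1 : G), S * T ⊆ W)
    ⟨Set.univ, by simp only [univ_mem, empty_mul, empty_subset, and_self]⟩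
    (fun _ _ huv ⟨T, hT, mem⟩ ↦ ⟨T, hT, (mul_subset_mul_right huv).trans mem⟩)
    (fun U V ⟨T₁, hT₁, mem1⟩ ⟨T₂, hT₂, mem2⟩ ↦ ⟨T₁ ∩ T₂, inter_mem hT₁ hT₂, by
      rw [union_mul]
      exact union_subset (mul_subset_mul_left inter_subset_left |>.trans mem1)
        (mul_subset_mul_left inter_subset_right |>.trans mem2)⟩)
  intro x memW
  have : (x, 1) ∈ (fun p ↦ p.1 * p.2) ⁻¹' W := by simp [memW]
  rcases isOpen_prod_iff.mp (continuous_mul.isOpen_preimage W <| WClopen.2) x 1 this with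
    ⟨U, V, Uopen, Vopen, xmemU, onememV, prodsub⟩
  have h6 : U * V ⊆ W := mul_subset_iff.mpr (fun _ hx _ hy ↦ prodsub (mk_mem_prod hx hy))
  exact ⟨U ∩ W, ⟨U, Uopen.mem_nhds xmemU, W, fun _ a ↦ a, rfl⟩,
    V, IsOpen.mem_nhds Vopen onememV, fun _ a ↦ h6 ((mul_subset_mul_right inter_subset_left) a)⟩

private lemma aux_exists_mulInvClosureNhd {W : Set G} (Wcpt : IsCompact W)
    (WClopen : IsClopen W) : ∃ T, IsTopologicalGroup.mulInvClosureNhd T W := by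
  rcases aux_exist_mul_closure_nhd Wcpt WClopen with ⟨S, Smemnhds, mulclose⟩
  rcases mem_nhds_iff.mp Smemnhds with ⟨U, UsubS, Uopen, onememU⟩
  refine ⟨U ∩ U⁻¹, ?_, ?_, ?_, ?_⟩
  · simp [Uopen.mem_nhds onememU, inv_mem_nhds_one]
  · simp [inter_comm]
  · exact Uopen.inter Uopen.inv
  · exact fun a ha ↦ mulclose (mul_subset_mul_left UsubS (mul_subset_mul_left inter_subset_left ha))

/-- van Dantzig: a locally compact totally disconnected Hausdorff group has a
compact open subgroup. -/
private lemma aux_vanDantzig (G : Type*) [Group G] [TopologicalSpace G] [IsTopologicalGroup G]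
    [T2Space G] [LocallyCompactSpace G] [TotallyDisconnectedSpace G] :
    ∃ U : Subgroup G, IsOpen (U : Set G) ∧ IsCompact (U : Set G) := by
  obtain ⟨s, scpt, hs⟩ := exists_compact_mem_nhds (1 : G)
  obtain ⟨W, WClopen, einW, hWs⟩ := loc_compact_Haus_tot_disc_of_zero_dim.mem_nhds_iff.mp hs
  have Wcpt : IsCompact W := scpt.of_isClosed_subset WClopen.isClosed hWs
  obtain ⟨V, hV⟩ := aux_exists_mulInvClosureNhd Wcpt WClopen
  let S : Subgroup G :=
    { carrier := ⋃ n, V ^ (n + 1)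
      mul_mem' := fun ha hb ↦ by
        rcases Set.mem_iUnion.mp ha with ⟨k, hk⟩
        rcases Set.mem_iUnion.mp hb with ⟨l, hl⟩
        apply Set.mem_iUnion.mpr
        exact ⟨k + 1 + l, by rw [add_assoc, pow_add]; exact Set.mul_mem_mul hk hl⟩
      one_mem' := Set.mem_iUnion.mpr ⟨0, by simp [mem_of_mem_nhds hV.nhds]⟩
      inv_mem' := fun ha ↦ by
        rcases Set.mem_iUnion.mp ha with ⟨k, hk⟩
        apply Set.mem_iUnion.mpr
        exact ⟨k, by rw [← hV.inv]; simpa only [inv_pow, Set.mem_inv, inv_inv] using hk⟩ }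
  have Sopen : IsOpen (S : Set G) := by
    refine isOpen_iUnion fun n ↦ ?_
    rw [pow_succ]
    exact hV.isOpen.mul_left
  have mulVpow : ∀ n : ℕ, W * V ^ (n + 1) ⊆ W := by
    intro n
    induction n with
    | zero => simpa using hV.mul
    | succ n ih => rw [pow_succ, ← mul_assoc]; exact (Set.mul_subset_mul_right ih).trans hV.mul
  have hsubW : (S : Set G) ⊆ W := by
    refine Set.iUnion_subset fun i a hai ↦ mulVpow i ?_
    simpa using Set.mul_mem_mul einW hai
  exact ⟨S, Sopen, Wcpt.of_isClosed_subset (S.isClosed_of_isOpen Sopen) hsubW⟩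

end AuxVD

/-- Theorem 4.3: A non-discrete, compactly generated, topologically simple t.d.l.c. group
has trivial virtual center; consequently every open compact subgroup has trivial
virtual center. -/
theorem stmt_4 {L : Type*} [Group L] [TopologicalSpace L] [IsTopologicalGroup L]
    [T2Space L] [LocallyCompactSpace L] [TotallyDisconnectedSpace L]
    [Nontrivial L]
    (hnd : ¬ DiscreteTopology L)
    (hsimple : ∀ N : Subgroup L, N.Normal → IsClosed (N : Set L) → N = ⊥ ∨ N = ⊤)
    (hcg : ∃ K : Set L, IsCompact K ∧ Subgroup.closure K = ⊤) :
    (∀ g : L, IsOpen ((Subgroup.centralizer {g} : Subgroup L) : Set L) → g = 1) ∧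
      ∀ G : Subgroup L, IsOpen (G : Set L) → IsCompact (G : Set L) →
        ∀ g : G, IsOpen ((Subgroup.centralizer {g} : Subgroup G) : Set G) → g = 1 := by
  classical
  obtain ⟨K, hKcpt, hKgen⟩ := hcg
  have key : ∀ g : L, IsOpen ((Subgroup.centralizer {g} : Subgroup L) : Set L) → g = 1 := by
    -- the virtual center as a subgroup
    set Q : Subgroup L :=
      { carrier := {g : L | IsOpen ((Subgroup.centralizer {g} : Subgroup L) : Set L)}
        one_mem' := by
          have h1 : (Subgroup.centralizer {(1 : L)} : Subgroup L) = ⊤ := by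
            ext x; simp [Subgroup.mem_centralizer_singleton_iff]
          show IsOpen ((Subgroup.centralizer {(1 : L)} : Subgroup L) : Set L)
          rw [h1, Subgroup.coe_top]; exact isOpen_univ
        mul_mem' := by
          intro a b ha hb
          show IsOpen ((Subgroup.centralizer {a * b} : Subgroup L) : Set L)
          refine Subgroup.isOpen_mono (H₁ := Subgroup.centralizer {a} ⊓ Subgroup.centralizer {b})
            ?_ ?_
          · intro x hx
            obtain ⟨h1, h2⟩ := Subgroup.mem_inf.mp hx
            rw [Subgroup.mem_centralizer_singleton_iff] at h1 h2 ⊢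
            rw [← mul_assoc, h1, mul_assoc, h2, ← mul_assoc]
          · rw [Subgroup.coe_inf]; exact ha.inter hb
        inv_mem' := by
          intro a ha
          show IsOpen ((Subgroup.centralizer {a⁻¹} : Subgroup L) : Set L)
          have h1 : (Subgroup.centralizer {a⁻¹} : Subgroup L) = Subgroup.centralizer {a} := by
            ext x
            simp only [Subgroup.mem_centralizer_singleton_iff]
            exact ⟨fun h => by have := (show Commute x a⁻¹ from h).inv_right; rw [inv_inv] at this; exact this,
              fun h => (show Commute x a from h).inv_right⟩
          rw [h1]; exact ha } with hQdef
    have hQmem : ∀ x : L, x ∈ Q ↔ IsOpen ((Subgroup.centralizer {x} : Subgroup L) : Set L) :=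
      fun x => Iff.rfl
    have hQnormal : Q.Normal := by
      constructor
      intro n hn x
      replace hn : IsOpen ((Subgroup.centralizer {n} : Subgroup L) : Set L) := (hQmem n).mp hn
      rw [hQmem]
      have hset : ((Subgroup.centralizer {x * n * x⁻¹} : Subgroup L) : Set L)
          = (fun y => x⁻¹ * y * x) ⁻¹' ((Subgroup.centralizer {n} : Subgroup L) : Set L) := by
        ext y
        simp only [Set.mem_preimage, SetLike.mem_coe, Subgroup.mem_centralizer_singleton_iff]
        constructor
        · intro h
          have := congrArg (fun z => x⁻¹ * z * x) h
          simpa [mul_assoc] using this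
        · intro h
          have := congrArg (fun z => x * z * x⁻¹) h
          simpa [mul_assoc] using this
      rw [hset]
      exact ((continuous_const.mul continuous_id).mul continuous_const).isOpen_preimage _ hn
    haveI := hQnormal
    rcases hsimple Q.topologicalClosure (Subgroup.is_normal_topologicalClosure Q)
      Q.isClosed_topologicalClosure with hbot | htop
    · intro g hg
      have hgQ : g ∈ Q := (hQmem g).mpr hg
      have : g ∈ Q.topologicalClosure := Q.le_topologicalClosure hgQ
      rwa [hbot, Subgroup.mem_bot] at this
    · exfalso
      have hdense : Dense (Q : Set L) := by
        rw [dense_iff_closure_eq, ← Subgroup.topologicalClosure_coe, htop, Subgroup.coe_top]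
      obtain ⟨U, hUopen, hUcpt⟩ := aux_vanDantzig L
      -- cover K by cosets of U with representatives in Q
      have hcover : K ⊆ ⋃ q : Q, (q : L) • (U : Set L) := by
        intro k hk
        obtain ⟨q, hqU, hqQ⟩ := hdense.inter_open_nonempty (k • (U : Set L)) (hUopen.smul k)
          ⟨k, Set.mem_smul_set.mpr ⟨1, U.one_mem, by simp⟩⟩
        obtain ⟨u, huU, hqu⟩ := Set.mem_smul_set.mp hqU
        refine Set.mem_iUnion.mpr ⟨⟨q, hqQ⟩, Set.mem_smul_set.mpr ⟨u⁻¹, U.inv_mem huU, ?_⟩⟩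
        show q • u⁻¹ = k
        rw [← hqu, smul_eq_mul, smul_eq_mul, mul_inv_cancel_right]
      obtain ⟨F, hF⟩ := hKcpt.elim_finite_subcover (fun q : Q => (q : L) • (U : Set L))
        (fun q => hUopen.smul _) hcover
      -- the open subgroup V
      set V : Subgroup L := U ⊓ F.inf (fun q => Subgroup.centralizer {(q : L)}) with hVdef
      have hVopen : IsOpen (V : Set L) := by
        rw [hVdef, Subgroup.coe_inf]
        exact hUopen.inter (aux_isOpen_finsetInf F _ (fun q _ => (hQmem q.1).mp q.2))
      have hVU : V ≤ U := inf_le_left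
      have hVcent : ∀ q ∈ F, V ≤ Subgroup.centralizer {(q : L)} :=
        fun q hq => le_trans inf_le_right (Finset.inf_le hq)
      -- cover U by finitely many cosets of V
      have hUcover : (U : Set L) ⊆ ⋃ u : U, (u : L) • (V : Set L) := fun x hx =>
        Set.mem_iUnion.mpr ⟨⟨x, hx⟩, Set.mem_smul_set.mpr ⟨1, V.one_mem, by simp⟩⟩
      obtain ⟨T₀, hT₀⟩ := hUcpt.elim_finite_subcover (fun u : U => (u : L) • (V : Set L))
        (fun u => hVopen.smul _) hUcover
      set T : Finset L := insert (1 : L) (T₀.image Subtype.val) with hTdef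
      have hTU : ∀ t ∈ T, t ∈ U := by
        intro t ht
        rcases Finset.mem_insert.mp ht with h | h
        · rw [h]; exact U.one_mem
        · obtain ⟨u, _, rfl⟩ := Finset.mem_image.mp h; exact u.2
      have conjmem : ∀ t x : L,
          x ∈ Subgroup.comap ((MulAut.conj t⁻¹).toMonoidHom) V ↔ t⁻¹ * x * t ∈ V := by
        intro t x
        rw [Subgroup.mem_comap]
        simp [MulAut.conj_apply]
      set W : Subgroup L := T.inf (fun t => Subgroup.comap ((MulAut.conj t⁻¹).toMonoidHom) V)
        with hWdef
      have hWmem : ∀ x : L, x ∈ W ↔ ∀ t ∈ T, t⁻¹ * x * t ∈ V := by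
        intro x
        rw [hWdef, Finset.inf_eq_iInf]
        simp only [Subgroup.mem_iInf]
        exact forall_congr' fun t => forall_congr' fun _ => conjmem t x
      have hWopen : IsOpen (W : Set L) := by
        apply aux_isOpen_finsetInf
        intro t _
        rw [Subgroup.coe_comap]
        refine IsOpen.preimage ?_ hVopen
        have : ⇑((MulAut.conj t⁻¹).toMonoidHom) = fun x : L => t⁻¹ * x * t := by
          funext x; simp [MulAut.conj_apply]
        rw [this]
        exact (continuous_const.mul continuous_id).mul continuous_const
      have hWV : W ≤ V := by
        intro x hx
        have := (hWmem x).mp hx 1 (Finset.mem_insert_self 1 _)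
        simpa using this
      -- U normalizes W
      have hUnorm : ∀ u, u ∈ U → ∀ x ∈ W, u * x * u⁻¹ ∈ W := by
        intro u hu x hx
        rw [hWmem]
        intro τ hτ
        have hz : u⁻¹ * τ ∈ (U : Set L) := U.mul_mem (U.inv_mem hu) (hTU τ hτ)
        obtain ⟨σ, hσT₀, hσmem⟩ := Set.mem_iUnion₂.mp (hT₀ hz)
        obtain ⟨v, hvV, hsv⟩ := Set.mem_smul_set.mp hσmem
        rw [smul_eq_mul] at hsv
        have hσT : (σ : L) ∈ T := Finset.mem_insert_of_mem (Finset.mem_image_of_mem _ hσT₀)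
        have hσx : (σ : L)⁻¹ * x * (σ : L) ∈ V := (hWmem x).mp hx _ hσT
        have hτeq : τ = u * ((σ : L) * v) := by rw [hsv, mul_inv_cancel_left]
        have hkey : τ⁻¹ * (u * x * u⁻¹) * τ = v⁻¹ * ((σ : L)⁻¹ * x * (σ : L)) * v := by
          rw [hτeq]; group
        rw [hkey]
        exact V.mul_mem (V.mul_mem (V.inv_mem hvV) hσx) hvV
      -- W is normal in L
      have hnormtop : (Subgroup.normalizer (W : Set L)) = ⊤ := by
        rw [← top_le_iff, ← hKgen, Subgroup.closure_le]
        intro k hk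
        obtain ⟨q, hqF, hqmem⟩ := Set.mem_iUnion₂.mp (hF hk)
        obtain ⟨u, huU, hqu⟩ := Set.mem_smul_set.mp hqmem
        rw [smul_eq_mul] at hqu
        have hqnorm : (q : L) ∈ (Subgroup.normalizer (W : Set L)) := by
          rw [Subgroup.mem_normalizer_iff]
          intro x
          constructor
          · intro hx
            have hcomm : x * (q : L) = (q : L) * x :=
              Subgroup.mem_centralizer_singleton_iff.mp (hVcent q hqF (hWV hx))
            have hxx : (q : L) * x * (q : L)⁻¹ = x := by rw [← hcomm, mul_inv_cancel_right]
            rwa [hxx]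
          · intro hx
            have hcomm : ((q : L) * x * (q : L)⁻¹) * (q : L)
                = (q : L) * ((q : L) * x * (q : L)⁻¹) :=
              Subgroup.mem_centralizer_singleton_iff.mp (hVcent q hqF (hWV hx))
            have hxy : x = (q : L) * x * (q : L)⁻¹ := by
              have h2 : x = (q : L)⁻¹ * ((q : L) * x * (q : L)⁻¹ * (q : L)) := by group
              rw [hcomm] at h2
              rwa [inv_mul_cancel_left] at h2
            rwa [show (q : L) * x * (q : L)⁻¹ = x from hxy.symm] at hx
        have hunorm : u ∈ (Subgroup.normalizer (W : Set L)) := by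
          rw [Subgroup.mem_normalizer_iff]
          intro x
          refine ⟨fun hx => hUnorm u huU x hx, fun hx => ?_⟩
          have := hUnorm u⁻¹ (U.inv_mem huU) _ hx
          simpa [mul_assoc] using this
        rw [show k = (q : L) * u from hqu.symm]
        exact (Subgroup.normalizer (W : Set L)).mul_mem hqnorm hunorm
      have hWnormal : W.Normal := Subgroup.normalizer_eq_top_iff.mp hnormtop
      rcases hsimple W hWnormal (W.isClosed_of_isOpen hWopen) with hWbot | hWtop
      · refine hnd (discreteTopology_of_isOpen_singleton_one ?_)
        rw [hWbot] at hWopen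
        simpa using hWopen
      · -- L is compact
        have hUtop : (U : Set L) = Set.univ := by
          rw [Set.eq_univ_iff_forall]
          intro x
          have hxW : x ∈ W := by rw [hWtop]; trivial
          exact (hWV.trans hVU) hxW
        haveI : CompactSpace L := isCompact_univ_iff.mp (hUtop ▸ hUcpt)
        obtain ⟨x, hx1⟩ := exists_ne (1 : L)
        obtain ⟨C, hCclopen, h1C, hCsub⟩ :=
          compact_exists_isClopen_in_isOpen (isOpen_compl_singleton (x := x))
            (Set.mem_compl_singleton_iff.mpr (Ne.symm hx1))
        obtain ⟨N, hNsub⟩ :=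
          IsTopologicalGroup.exist_openNormalSubgroup_sub_clopen_nhds_of_one hCclopen h1C
        have hNopen : IsOpen ((N.toOpenSubgroup.toSubgroup : Subgroup L) : Set L) :=
          N.toOpenSubgroup.isOpen
        rcases hsimple N.toOpenSubgroup.toSubgroup N.isNormal'
          (Subgroup.isClosed_of_isOpen _ hNopen) with hb | ht
        · refine hnd (discreteTopology_of_isOpen_singleton_one ?_)
          rw [hb] at hNopen
          simpa using hNopen
        · have hxN : x ∈ (N.toOpenSubgroup.toSubgroup : Subgroup L) := by rw [ht]; trivial
          exact (hCsub (hNsub hxN)) rfl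
  refine ⟨key, ?_⟩
  intro G hGopen hGcpt g hg
  have himg : IsOpen ((Subgroup.map G.subtype (Subgroup.centralizer {g}) : Subgroup L) : Set L) := by
    rw [Subgroup.coe_map, Subgroup.coe_subtype]
    exact hGopen.isOpenMap_subtype_val _ hg
  have hle : Subgroup.map G.subtype (Subgroup.centralizer {g})
      ≤ Subgroup.centralizer {(g : L)} := by
    rintro _ ⟨y, hy, rfl⟩
    rw [Subgroup.mem_centralizer_singleton_iff]
    have h := Subgroup.mem_centralizer_singleton_iff.mp hy
    simp only [Subgroup.coe_subtype]
    exact_mod_cast congrArg Subtype.val h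
  have hg1 : (g : L) = 1 := key _ (Subgroup.isOpen_mono hle himg)
  exact OneMemClass.coe_eq_one.mp hg1
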